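/- Let G = (X, Ed) be a finite planar graph in the plane whose every bond has length in [1, 1+δ] with 1+δ < 1/(2 sin(π/7)). Then the number of edges incident to any fixed vertex x ∈ X is at most 6. -/

import Mathlib

open Real

lemma corner_bound (R s t : ℝ) (hR1 : 1 ≤ R) (ht1 : 1 ≤ t) (htR : t ≤ R)
    (hR2 : R < 2 - 4*s^2) (hsq : 4*s^2*R^2 < 1) :
    (R - t)^2 + 4*s^2*(t*R) < 1 := by
  have hR0 : (0:ℝ) < R := by linarith
  rcases le_or_gt (t + 1 - 2*R + 4*s^2*R) 0 with h | h
  · nlinarith [mul_nonneg (sub_nonneg.2 ht1) (neg_nonneg.2 h), mul_pos hR0 (show (0:ℝ) < 2 - 4*s^2 - R by linarith)]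
  · nlinarith [mul_nonneg (sub_nonneg.2 htR) (show (0:ℝ) ≤ t - R + 4*s^2*R by linarith)]

lemma arith_key (R s r₁ r₂ c : ℝ) (hslo : 0.426 < s) (hshi : s < 0.449)
    (hR : 2 * R * s < 1) (hz1 : 1 ≤ r₁) (hzR : r₁ ≤ R) (hw1 : 1 ≤ r₂) (hwR : r₂ ≤ R)
    (hcon : 1 - 2*s^2 ≤ c) (hd2 : 1 ≤ r₁^2 + r₂^2 - 2*r₁*r₂*c) : False := by
  have hs0 : (0:ℝ) < s := by linarith
  have hR1 : (1:ℝ) ≤ R := le_trans hz1 hzR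
  have hR0 : (0:ℝ) < R := by linarith
  have hr₁r₂ : (1:ℝ) ≤ r₁ * r₂ := by nlinarith
  have hub : (1:ℝ) ≤ (r₁ - r₂)^2 + 4*s^2*(r₁*r₂) := by nlinarith
  have hg : (1:ℝ) ≤ 4*s - 8*s^3 := by
    nlinarith [mul_pos (show (0:ℝ) < 1 - 2*s by linarith)
      (show (0:ℝ) < 4*s^2 + 2*s - 1 by nlinarith)]
  have hR2 : R < 2 - 4*s^2 := by nlinarith
  have hsq : 4*s^2*R^2 < 1 := by
    nlinarith [mul_pos (show (0:ℝ) < 1 - 2*R*s by linarith)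
      (show (0:ℝ) < 1 + 2*R*s by nlinarith [mul_pos hR0 hs0])]
  rcases le_total r₁ r₂ with hle | hle
  · have hcor := corner_bound R s r₁ hR1 hz1 hzR hR2 hsq
    nlinarith [mul_nonneg (sub_nonneg.2 hwR)
      (show (0:ℝ) ≤ R + r₂ - 2*r₁ + 4*s^2*r₁ by nlinarith [sq_nonneg s])]
  · have hcor := corner_bound R s r₂ hR1 hw1 hwR hR2 hsq
    nlinarith [mul_nonneg (sub_nonneg.2 hzR)
      (show (0:ℝ) ≤ R + r₁ - 2*r₂ + 4*s^2*r₂ by nlinarith [sq_nonneg s])]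

lemma sin_pi_div_seven_bounds : 0.426 < Real.sin (π/7) ∧ Real.sin (π/7) < 0.449 := by
  have h1 : (3.1415:ℝ) < π := by have := Real.pi_gt_d4; norm_num at this ⊢; linarith
  have h2 : π < 3.1416 := by have := Real.pi_lt_d4; norm_num at this ⊢; linarith
  have hx0 : (0:ℝ) < π/7 := by linarith
  have hx1 : π/7 ≤ 1 := by linarith
  refine ⟨?_, ?_⟩
  · have := Real.sin_gt_sub_cube hx0
    nlinarith [this, sq_nonneg (π/7)]
  · have := Real.sin_lt hx0
    linarith

lemma cos_lt_key (R : ℝ) (hR : 2 * R * Real.sin (π/7) < 1)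
    (z w : ℂ) (hz1 : 1 ≤ ‖z‖) (hzR : ‖z‖ ≤ R)
    (hw1 : 1 ≤ ‖w‖) (hwR : ‖w‖ ≤ R)
    (hd : 1 ≤ ‖z - w‖) :
    Real.cos (z.arg - w.arg) < Real.cos (2 * π / 7) := by
  obtain ⟨hslo, hshi⟩ := sin_pi_div_seven_bounds
  have hz0 : z ≠ 0 := fun h => by rw [h] at hz1; simp at hz1; linarith
  have hw0 : w ≠ 0 := fun h => by rw [h] at hw1; simp at hw1; linarith
  have hzre : z.re = ‖z‖ * Real.cos z.arg := by
    rw [Complex.cos_arg hz0]; field_simp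
  have hzim : z.im = ‖z‖ * Real.sin z.arg := by
    rw [Complex.sin_arg]; field_simp
  have hwre : w.re = ‖w‖ * Real.cos w.arg := by
    rw [Complex.cos_arg hw0]; field_simp
  have hwim : w.im = ‖w‖ * Real.sin w.arg := by
    rw [Complex.sin_arg]; field_simp
  have hid : (‖z - w‖)^2 =
      (‖z‖)^2 + (‖w‖)^2
        - 2*(‖z‖)*(‖w‖)*Real.cos (z.arg - w.arg) := by
    rw [Complex.sq_norm, Complex.normSq_sub, Complex.sq_norm, Complex.sq_norm, Real.cos_sub]
    have h2 : (z * (starRingEnd ℂ) w).re = z.re * w.re + z.im * w.im := by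
      simp [Complex.mul_re]
    rw [h2, hzre, hzim, hwre, hwim]
    ring
  have hcos27 : Real.cos (2*π/7) = 1 - 2*(Real.sin (π/7))^2 := by
    rw [show (2*π/7 : ℝ) = 2*(π/7) by ring, Real.cos_two_mul, Real.cos_sq']
    ring
  by_contra hcon
  push_neg at hcon
  rw [hcos27] at hcon
  exact arith_key R (Real.sin (π/7)) (‖z‖) (‖w‖)
    (Real.cos (z.arg - w.arg)) hslo hshi hR hz1 hzR hw1 hwR hcon
    (by rw [← hid]; nlinarith [hd])

theorem degree_le_six (δ : ℝ) (hδ0 : 0 < δ)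
    (hδ1 : 1 + δ < 1 / (2 * Real.sin (π / 7)))
    (X : Finset (EuclideanSpace ℝ (Fin 2)))
    (hsep : ∀ x ∈ X, ∀ y ∈ X, x ≠ y → 1 ≤ dist x y)
    (Ed : Finset (Sym2 (EuclideanSpace ℝ (Fin 2))))
    (hEd : ∀ e ∈ Ed, ¬ e.IsDiag)
    (hEd' : ∀ y z : EuclideanSpace ℝ (Fin 2), s(y, z) ∈ Ed →
      y ∈ X ∧ z ∈ X ∧ 1 ≤ dist y z ∧ dist y z ≤ 1 + δ)
    (x : EuclideanSpace ℝ (Fin 2)) (hx : x ∈ X) :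
    {e ∈ (Ed : Set (Sym2 (EuclideanSpace ℝ (Fin 2)))) | x ∈ e}.ncard ≤ 6 := by
  classical
  have hsin0 : 0 < Real.sin (π/7) := by
    obtain ⟨h, _⟩ := sin_pi_div_seven_bounds; linarith
  have hR : 2 * (1+δ) * Real.sin (π/7) < 1 := by
    rw [lt_div_iff₀ (by positivity)] at hδ1; linarith
  set T : Set (EuclideanSpace ℝ (Fin 2)) := {y | y ∈ X ∧ s(x, y) ∈ Ed} with hT
  have hTfin : T.Finite := X.finite_toSet.subset fun y hy => hy.1
  have hstep1 : {e ∈ (Ed : Set (Sym2 (EuclideanSpace ℝ (Fin 2)))) | x ∈ e}.ncard ≤ T.ncard := by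
    refine Set.ncard_le_ncard_of_injOn
      (fun e => if h : x ∈ e then Sym2.Mem.other h else x) ?_ ?_ hTfin
    · rintro e ⟨heEd, hxe⟩
      simp only [dif_pos hxe]
      have hspec := Sym2.other_spec hxe
      have h2 := hEd' x (Sym2.Mem.other hxe) (by rw [hspec]; exact heEd)
      exact ⟨h2.2.1, by rw [hspec]; exact heEd⟩
    · rintro e₁ ⟨he₁, hx₁⟩ e₂ ⟨he₂, hx₂⟩ h
      simp only [dif_pos hx₁, dif_pos hx₂] at h
      rw [← Sym2.other_spec hx₁, ← Sym2.other_spec hx₂, h]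
  refine le_trans hstep1 ?_
  by_contra hcard
  push_neg at hcard
  obtain ⟨F, hFsub, hF7⟩ := Finset.exists_subset_card_eq (s := hTfin.toFinset) (n := 7) (by
    rw [← Set.ncard_eq_toFinset_card T hTfin]; omega)
  have hFT : ∀ y ∈ F, y ∈ T := fun y hy => hTfin.mem_toFinset.1 (hFsub hy)
  set f := Complex.orthonormalBasisOneI.repr.symm with hf
  set θ : EuclideanSpace ℝ (Fin 2) → ℝ := fun y => (f y - f x).arg with hθ
  -- pairwise key fact
  have hkey : ∀ y₁ ∈ T, ∀ y₂ ∈ T, y₁ ≠ y₂ →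
      Real.cos (θ y₁ - θ y₂) < Real.cos (2 * π / 7) := by
    intro y₁ h₁ y₂ h₂ hne
    have habs : ∀ y : EuclideanSpace ℝ (Fin 2), y ∈ T →
        ‖f y - f x‖ = dist y x := by
      intro y _
      rw [← Complex.dist_eq, f.dist_map]
    have hd1 : ∀ y : EuclideanSpace ℝ (Fin 2), y ∈ T →
        1 ≤ dist y x ∧ dist y x ≤ 1 + δ := by
      intro y hy
      have := hEd' x y hy.2
      rw [dist_comm]
      exact ⟨this.2.2.1, this.2.2.2⟩
    refine cos_lt_key (1+δ) hR _ _ ?_ ?_ ?_ ?_ ?_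
    · rw [habs y₁ h₁]; exact (hd1 y₁ h₁).1
    · rw [habs y₁ h₁]; exact (hd1 y₁ h₁).2
    · rw [habs y₂ h₂]; exact (hd1 y₂ h₂).1
    · rw [habs y₂ h₂]; exact (hd1 y₂ h₂).2
    · have : f y₁ - f x - (f y₂ - f x) = f y₁ - f y₂ := by ring
      rw [this, ← Complex.dist_eq, f.dist_map]
      exact hsep y₁ h₁.1 y₂ h₂.1 hne
  have hcos_lt_one : Real.cos (2 * π / 7) ≤ 1 := Real.cos_le_one _
  have hinjθ : Set.InjOn θ F := by
    intro y₁ h₁ y₂ h₂ h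
    by_contra hne
    have := hkey y₁ (hFT y₁ h₁) y₂ (hFT y₂ h₂) hne
    rw [h, sub_self, Real.cos_zero] at this
    linarith
  set A := F.image θ with hA
  have hA7 : A.card = 7 := by
    rw [hA, Finset.card_image_of_injOn hinjθ, hF7]
  set e := A.orderIsoOfFin hA7 with he
  set g : Fin 7 → ℝ := fun i => (e i : ℝ) with hg
  have hmono : ∀ i j : Fin 7, i < j → g i < g j := by
    intro i j hij
    exact Subtype.coe_lt_coe.2 (e.strictMono hij)
  have hYex : ∀ i : Fin 7, ∃ y, y ∈ F ∧ θ y = g i := by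
    intro i
    obtain ⟨y, hy, hy2⟩ := Finset.mem_image.1 (e i).2
    exact ⟨y, hy, hy2⟩
  choose Y hYF hYθ using hYex
  have hkey' : ∀ i j : Fin 7, g i ≠ g j →
      Real.cos (g j - g i) < Real.cos (2 * π / 7) := by
    intro i j hne
    rw [← hYθ i, ← hYθ j]
    refine hkey (Y j) (hFT _ (hYF j)) (Y i) (hFT _ (hYF i)) ?_
    intro h
    exact hne (by rw [← hYθ i, ← hYθ j, h])
  have hpi7 : 2*π/7 ≤ π := by linarith [Real.pi_pos]
  have gap : ∀ i j : Fin 7, i < j → 2*π/7 < g j - g i := by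
    intro i j hij
    have hlt := hmono i j hij
    have hc := hkey' i j (ne_of_lt hlt)
    by_contra hle
    push_neg at hle
    have h0 : 0 ≤ g j - g i := by linarith
    have := Real.cos_le_cos_of_nonneg_of_le_pi h0 hpi7 hle
    linarith
  have h01 := gap 0 1 (by decide)
  have h12 := gap 1 2 (by decide)
  have h23 := gap 2 3 (by decide)
  have h34 := gap 3 4 (by decide)
  have h45 := gap 4 5 (by decide)
  have h56 := gap 5 6 (by decide)
  have hlo : -π < g 0 := by rw [← hYθ 0]; exact Complex.neg_pi_lt_arg _
  have hhi : g 6 ≤ π := by rw [← hYθ 6]; exact Complex.arg_le_pi _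
  have hc06 := hkey' 0 6 (by intro h; linarith)
  have hD : 12*(π/7) < g 6 - g 0 := by linarith
  have h0' : 0 ≤ 2*π - (g 6 - g 0) := by linarith
  have hle' : 2*π - (g 6 - g 0) ≤ 2*π/7 := by linarith
  have hcc := Real.cos_le_cos_of_nonneg_of_le_pi h0' hpi7 hle'
  rw [Real.cos_two_pi_sub] at hcc
  linarith
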